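/- Let K be the free Z-module on the set of finite words \lambda in the alphabet {\bullet,\circ}, with basis elements a_\lambda. Define a comultiplication res: K \to K \otimes K by res(a_\lambda) = \sum_{i=0}^n a_{\lambda[1,i]} \otimes a_{\lambda(i,n]} + \sum_{i=1}^n a_{\lambda[1,i)} \otimes a_{\lambda(i,n]}, where n = \ell(\lambda). Then the Z-linear map \delta: K \to Z given by \delta(a_\lambda) = (-1)^{\ell(\lambda)} is a counit for res, i.e., (\delta \otimes id) \circ res = id and (id \otimes \delta) \circ res = id. -/

import Mathlib

/-- A weight: a word in the two-letter alphabet `{•, ∘}` (encoded as `Bool`,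
with `true = •` and `false = ∘`). -/
abbrev Word : Type := List Bool

/-- The Grothendieck group `K`: the free `ℤ`-module on the set of weights,
with basis `a_λ = Finsupp.single λ 1`. -/
abbrev K : Type := Word →₀ ℤ

/-- The model of `K ⊗ K`: the free `ℤ`-module on pairs of weights, with
`a_λ ⊗ a_μ = Finsupp.single (λ, μ) 1`. -/
abbrev K2 : Type := Word × Word →₀ ℤ

/-- `res` on a basis element: `res(a_λ) = ∑_{i=0}^n a_{λ[1,i]} ⊗ a_{λ(i,n]}
+ ∑_{i=1}^n a_{λ[1,i)} ⊗ a_{λ(i,n]}` where `n = ℓ(λ)`. -/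
noncomputable def resWord (w : Word) : K2 :=
  (∑ i ∈ Finset.range (w.length + 1), Finsupp.single (w.take i, w.drop i) 1)
    + ∑ i ∈ Finset.range w.length, Finsupp.single (w.take i, w.drop (i + 1)) 1

/-- The restriction comultiplication `res : K → K ⊗ K`. -/
noncomputable def res : K →ₗ[ℤ] K2 :=
  Finsupp.lift K2 ℤ Word resWord

/-- The counit `δ : K → ℤ`, `δ(a_λ) = (-1)^{ℓ(λ)}`. -/
noncomputable def deltaMap : K →ₗ[ℤ] ℤ :=
  Finsupp.lift ℤ ℤ Word fun w => (-1 : ℤ) ^ w.length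

/-- `δ ⊗ id : K ⊗ K → K`. -/
noncomputable def deltaLeft : K2 →ₗ[ℤ] K :=
  Finsupp.lift K ℤ (Word × Word) fun p => ((-1 : ℤ) ^ p.1.length) • Finsupp.single p.2 1

/-- `id ⊗ δ : K ⊗ K → K`. -/
noncomputable def deltaRight : K2 →ₗ[ℤ] K :=
  Finsupp.lift K ℤ (Word × Word) fun p => ((-1 : ℤ) ^ p.2.length) • Finsupp.single p.1 1

/-- `δ(a_λ) = (-1)^{ℓ(λ)}` is a counit for `res`:
`(δ ⊗ id) ∘ res = id` and `(id ⊗ δ) ∘ res = id`. -/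
lemma deltaLeft_single (p : Word × Word) :
    deltaLeft (Finsupp.single p 1) = ((-1 : ℤ) ^ p.1.length) • Finsupp.single p.2 1 := by
  rw [deltaLeft, Finsupp.lift_apply, Finsupp.sum_single_index (by simp), one_smul]

lemma deltaRight_single (p : Word × Word) :
    deltaRight (Finsupp.single p 1) = ((-1 : ℤ) ^ p.2.length) • Finsupp.single p.1 1 := by
  rw [deltaRight, Finsupp.lift_apply, Finsupp.sum_single_index (by simp), one_smul]

lemma res_single (w : Word) : res (Finsupp.single w 1) = resWord w := by
  simp [res, Finsupp.lift_apply, Finsupp.sum_single_index]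

lemma deltaLeft_resWord (w : Word) : deltaLeft (resWord w) = Finsupp.single w 1 := by
  set n := w.length with hn
  rw [resWord, map_add, map_sum, map_sum]
  simp only [deltaLeft_single]
  have h1 : ∀ i ∈ Finset.range (n + 1),
      ((-1 : ℤ) ^ (w.take i).length) • (Finsupp.single (w.drop i) 1 : K)
        = ((-1 : ℤ) ^ i) • Finsupp.single (w.drop i) 1 := by
    intro i hi
    rw [List.length_take, min_eq_left (Nat.lt_succ_iff.mp (Finset.mem_range.mp hi))]
  have h2 : ∀ i ∈ Finset.range n,
      ((-1 : ℤ) ^ (w.take i).length) • (Finsupp.single (w.drop (i + 1)) 1 : K)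
        = ((-1 : ℤ) ^ i) • Finsupp.single (w.drop (i + 1)) 1 := by
    intro i hi
    rw [List.length_take, min_eq_left (Nat.le_of_lt (Finset.mem_range.mp hi))]
  rw [Finset.sum_congr rfl h1, Finset.sum_congr rfl h2, Finset.sum_range_succ']
  have h3 : (∑ i ∈ Finset.range n, ((-1 : ℤ) ^ (i + 1)) • (Finsupp.single (w.drop (i + 1)) 1 : K))
      + ∑ i ∈ Finset.range n, ((-1 : ℤ) ^ i) • (Finsupp.single (w.drop (i + 1)) 1 : K) = 0 := by
    rw [← Finset.sum_add_distrib]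
    apply Finset.sum_eq_zero
    intro i _
    rw [pow_succ, mul_comm, mul_smul]
    simp
  simp only [pow_zero, one_smul, List.drop_zero]
  rw [add_assoc, add_comm (Finsupp.single w 1), ← add_assoc, h3, zero_add]

lemma deltaRight_resWord (w : Word) : deltaRight (resWord w) = Finsupp.single w 1 := by
  set n := w.length with hn
  rw [resWord, map_add, map_sum, map_sum]
  simp only [deltaRight_single, List.length_drop]
  rw [Finset.sum_range_succ]
  have h3 : (∑ i ∈ Finset.range n, ((-1 : ℤ) ^ (n - i)) • (Finsupp.single (w.take i) 1 : K))
      + ∑ i ∈ Finset.range n, ((-1 : ℤ) ^ (n - (i + 1))) • (Finsupp.single (w.take i) 1 : K) = 0 := by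
    rw [← Finset.sum_add_distrib]
    apply Finset.sum_eq_zero
    intro i hi
    have hi' := Finset.mem_range.mp hi
    have : n - i = (n - (i + 1)) + 1 := by omega
    rw [this, pow_succ, mul_comm, mul_smul]
    simp
  rw [add_comm (∑ i ∈ Finset.range n, _), add_assoc, h3, add_zero]
  simp [hn]

theorem delta_is_counit :
    (∀ x : K, deltaLeft (res x) = x) ∧ (∀ x : K, deltaRight (res x) = x) := by
  have key : ∀ (f : K2 →ₗ[ℤ] K), (∀ w, f (resWord w) = Finsupp.single w 1) →
      ∀ x : K, f (res x) = x := by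
    intro f hf x
    induction x using Finsupp.induction_linear with
    | zero => simp
    | add a b ha hb => rw [map_add, map_add, ha, hb]
    | single w c =>
      have : (Finsupp.single w c : K) = c • Finsupp.single w 1 := by
        rw [Finsupp.smul_single, smul_eq_mul, mul_one]
      rw [this, map_smul, map_smul, res_single, hf]
  exact ⟨key deltaLeft deltaLeft_resWord, key deltaRight deltaRight_resWord⟩
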